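/- The weight w_n := 2 − √((n+1)/n) − √((n−1)/n) is optimal in the improved discrete Hardy inequality: if w̃ : ℕ → ℝ is a sequence with w̃_n ≥ w_n for all n ≥ 1 and ∑_{n=1}^∞ w̃_n |u_n|² ≤ ∑_{n=1}^∞ |u_n − u_{n−1}|² holds for every finitely supported complex sequence u with u_0 = 0, then w̃_n = w_n for all n ≥ 1. -/

import Mathlib

open Finset

namespace HardyOpt

/-- Partial sums of the harmonic series. -/
noncomputable def hsum (n : ℕ) : ℝ := ∑ i ∈ Finset.range n, (1 : ℝ) / (i + 1)

lemma hsum_mono : Monotone hsum := by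
  intro a b hab
  exact Finset.sum_le_sum_of_subset_of_nonneg (Finset.range_subset_range.2 hab)
    (fun i _ _ => by positivity)

lemma hsum_succ (n : ℕ) : hsum (n + 1) = hsum n + 1 / ((n : ℝ) + 1) := by
  simp [hsum, Finset.sum_range_succ]

/-- Clamp a real to `[0,1]`. -/
noncomputable def clamp (x : ℝ) : ℝ := min 1 (max 0 x)

lemma clamp_nonneg (x : ℝ) : 0 ≤ clamp x := le_min one_pos.le (le_max_left 0 x)

lemma clamp_le_one (x : ℝ) : clamp x ≤ 1 := min_le_left _ _

lemma clamp_mono {a b : ℝ} (h : a ≤ b) : clamp a ≤ clamp b := by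
  unfold clamp
  exact min_le_min le_rfl (max_le_max le_rfl h)

lemma clamp_lip {a b : ℝ} (h : a ≤ b) : clamp b - clamp a ≤ b - a := by
  unfold clamp
  rcases le_total a 0 with ha | ha <;> rcases le_total b 0 with hb | hb <;>
    rcases le_total (1:ℝ) a with ha1 | ha1 <;> rcases le_total (1:ℝ) b with hb1 | hb1 <;>
    simp [max_def, min_def] <;> split_ifs <;> linarith

lemma clamp_of_one_le {x : ℝ} (h : 1 ≤ x) : clamp x = 1 := by
  unfold clamp
  rw [max_eq_right (by linarith), min_eq_left h]

lemma clamp_of_nonpos {x : ℝ} (h : x ≤ 0) : clamp x = 0 := by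
  unfold clamp
  rw [max_eq_left h, min_eq_right one_pos.le]

/-- The per-site algebraic identity of the ground-state representation. -/
lemma keyterm (n : ℕ) (p q : ℝ) :
    (Real.sqrt ((n : ℝ) + 1) * q - Real.sqrt (n : ℝ) * p) ^ 2
      - (2 - Real.sqrt (((n : ℝ) + 2) / ((n : ℝ) + 1))
          - Real.sqrt ((n : ℝ) / ((n : ℝ) + 1))) * (Real.sqrt ((n : ℝ) + 1) * q) ^ 2
      - Real.sqrt ((n : ℝ) * ((n : ℝ) + 1)) * (q - p) ^ 2
    = (Real.sqrt (((n : ℝ) + 1) * ((n : ℝ) + 2)) - ((n : ℝ) + 1)) * q ^ 2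
      - (Real.sqrt ((n : ℝ) * ((n : ℝ) + 1)) - (n : ℝ)) * p ^ 2 := by
  have hn0 : (0:ℝ) ≤ (n : ℝ) := Nat.cast_nonneg n
  have h1 : (0:ℝ) < (n : ℝ) + 1 := by linarith
  have h2 : (0:ℝ) ≤ (n : ℝ) + 2 := by linarith
  set A := Real.sqrt (n : ℝ) with hAdef
  set B := Real.sqrt ((n : ℝ) + 1) with hBdef
  set C := Real.sqrt ((n : ℝ) + 2) with hCdef
  have hA : A ^ 2 = (n : ℝ) := Real.sq_sqrt hn0
  have hB : B ^ 2 = (n : ℝ) + 1 := Real.sq_sqrt h1.le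
  have hBpos : 0 < B := Real.sqrt_pos.2 h1
  have hdiv1 : Real.sqrt (((n : ℝ) + 2) / ((n : ℝ) + 1)) = C / B := by
    rw [Real.sqrt_div h2, hCdef, hBdef]
  have hdiv2 : Real.sqrt ((n : ℝ) / ((n : ℝ) + 1)) = A / B := by
    rw [Real.sqrt_div hn0, hAdef, hBdef]
  have hmul1 : Real.sqrt ((n : ℝ) * ((n : ℝ) + 1)) = A * B := Real.sqrt_mul hn0 _
  have hmul2 : Real.sqrt (((n : ℝ) + 1) * ((n : ℝ) + 2)) = B * C := Real.sqrt_mul h1.le _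
  rw [hdiv1, hdiv2, hmul1, hmul2]
  have hw : (2 - C / B - A / B) * (B * q) ^ 2
      = 2 * B ^ 2 * q ^ 2 - C * B * q ^ 2 - A * B * q ^ 2 := by
    field_simp
  rw [hw]
  linear_combination p ^ 2 * hA - q ^ 2 * hB

/-- The Hardy weight. -/
noncomputable def wR (m : ℕ) : ℝ :=
  2 - Real.sqrt (((m : ℝ) + 1) / (m : ℝ)) - Real.sqrt (((m : ℝ) - 1) / (m : ℝ))

lemma wR_succ (n : ℕ) : wR (n + 1)
    = 2 - Real.sqrt (((n : ℝ) + 2) / ((n : ℝ) + 1))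
        - Real.sqrt ((n : ℝ) / ((n : ℝ) + 1)) := by
  unfold wR
  push_cast
  ring_nf

/-- Ground-state representation identity for `v n = √n * ψ n`. -/
lemma identity (ψ : ℕ → ℝ) (M : ℕ) :
    ∑ n ∈ Finset.range M,
      ((Real.sqrt ((n : ℝ) + 1) * ψ (n + 1) - Real.sqrt (n : ℝ) * ψ n) ^ 2
        - wR (n + 1) * (Real.sqrt ((n : ℝ) + 1) * ψ (n + 1)) ^ 2)
    = (∑ n ∈ Finset.range M, Real.sqrt ((n : ℝ) * ((n : ℝ) + 1)) * (ψ (n + 1) - ψ n) ^ 2)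
      + (Real.sqrt ((M : ℝ) * ((M : ℝ) + 1)) - (M : ℝ)) * ψ M ^ 2 := by
  set f : ℕ → ℝ := fun n => (Real.sqrt ((n : ℝ) * ((n : ℝ) + 1)) - (n : ℝ)) * ψ n ^ 2 with hf
  have hstep : ∀ n ∈ Finset.range M,
      (Real.sqrt ((n : ℝ) + 1) * ψ (n + 1) - Real.sqrt (n : ℝ) * ψ n) ^ 2
        - wR (n + 1) * (Real.sqrt ((n : ℝ) + 1) * ψ (n + 1)) ^ 2
        - Real.sqrt ((n : ℝ) * ((n : ℝ) + 1)) * (ψ (n + 1) - ψ n) ^ 2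
      = f (n + 1) - f n := by
    intro n _
    have h := keyterm n (ψ n) (ψ (n + 1))
    rw [wR_succ]
    simp only [hf]
    push_cast
    ring_nf
    ring_nf at h
    linarith
  have htel : ∑ n ∈ Finset.range M,
      ((Real.sqrt ((n : ℝ) + 1) * ψ (n + 1) - Real.sqrt (n : ℝ) * ψ n) ^ 2
        - wR (n + 1) * (Real.sqrt ((n : ℝ) + 1) * ψ (n + 1)) ^ 2
        - Real.sqrt ((n : ℝ) * ((n : ℝ) + 1)) * (ψ (n + 1) - ψ n) ^ 2)
      = f M - f 0 := by
    rw [Finset.sum_congr rfl hstep]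
    exact Finset.sum_range_sub f M
  have hf0 : f 0 = 0 := by simp [hf]
  have := Finset.sum_sub_distrib (s := Finset.range M)
    (f := fun n => (Real.sqrt ((n : ℝ) + 1) * ψ (n + 1) - Real.sqrt (n : ℝ) * ψ n) ^ 2
        - wR (n + 1) * (Real.sqrt ((n : ℝ) + 1) * ψ (n + 1)) ^ 2)
    (g := fun n => Real.sqrt ((n : ℝ) * ((n : ℝ) + 1)) * (ψ (n + 1) - ψ n) ^ 2)
  rw [this] at htel
  rw [hf0, sub_zero] at htel
  simp only [hf] at htel
  linarith

end HardyOpt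

open HardyOpt in
/-- Optimality of the weight `w n = 2 - √((n+1)/n) - √((n-1)/n)` in the improved discrete Hardy
inequality: if `wtilde n ≥ w n` for all `n ≥ 1` and the Hardy inequality with weight `wtilde` holds for
all finitely supported complex sequences vanishing at `0`, then `wtilde n = w n` for all `n ≥ 1`. -/
theorem improved_discrete_hardy_optimal (wtilde : ℕ → ℝ)
    (hge : ∀ n : ℕ, 1 ≤ n →
      2 - Real.sqrt (((n : ℝ) + 1) / (n : ℝ)) - Real.sqrt (((n : ℝ) - 1) / (n : ℝ)) ≤ wtilde n)
    (hin : ∀ u : ℕ → ℂ, u 0 = 0 → (Function.support u).Finite →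
      ∑' n : ℕ, wtilde (n + 1) * ‖u (n + 1)‖ ^ 2 ≤
        ∑' n : ℕ, ‖u (n + 1) - u n‖ ^ 2) :
    ∀ n : ℕ, 1 ≤ n →
      wtilde n = 2 - Real.sqrt (((n : ℝ) + 1) / (n : ℝ)) - Real.sqrt (((n : ℝ) - 1) / (n : ℝ)) := by
  intro N hN
  have hwN := hge N hN
  refine le_antisymm ?_ hwN
  change wtilde N ≤ wR N
  by_contra hlt
  push_neg at hlt
  set δ := wtilde N - wR N with hδ
  have hδpos : 0 < δ := by simp only [hδ]; linarith
  have hNpos : (0:ℝ) < (N : ℝ) := by exact_mod_cast hN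
  have key : ∀ T : ℝ, 0 < T → δ * (N : ℝ) ≤ 1 / T := by
    intro T hT
    -- choose a cutoff point M
    have hev := (Real.tendsto_sum_range_one_div_nat_succ_atTop.eventually_ge_atTop
      (hsum N + T)).and (Filter.eventually_ge_atTop N)
    obtain ⟨M, hM1, hM2⟩ := hev.exists
    have hM1 : hsum N + T ≤ hsum M := hM1
    -- the test sequence
    set ψ : ℕ → ℝ := fun n => clamp (1 + (hsum N - hsum n) / T) with hψ
    set v : ℕ → ℝ := fun n => Real.sqrt (n : ℝ) * ψ n with hv
    set u : ℕ → ℂ := fun n => ((v n : ℝ) : ℂ) with hu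
    have hψanti : ∀ a b : ℕ, a ≤ b → ψ b ≤ ψ a := by
      intro a b hab
      apply clamp_mono
      have h := hsum_mono hab
      gcongr
    have hψN1 : ψ N = 1 := by
      simp only [hψ]
      apply clamp_of_one_le
      simp
    have hψzero : ∀ n, M ≤ n → ψ n = 0 := by
      intro n hn
      simp only [hψ]
      apply clamp_of_nonpos
      have h := hsum_mono hn
      rw [← sub_nonpos]
      have : (hsum N - hsum n) / T ≤ -1 := by
        rw [div_le_iff₀ hT]
        linarith
      linarith
    have hvzero : ∀ n, M ≤ n → v n = 0 := by
      intro n hn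
      simp [hv, hψzero n hn]
    have hu0 : u 0 = 0 := by simp [hu, hv]
    have hufin : (Function.support u).Finite := by
      apply Set.Finite.subset (Set.finite_Iio M)
      intro n hn
      rw [Set.mem_Iio]
      by_contra hc
      push_neg at hc
      exact hn (by simp [hu, hvzero n hc])
    have habs : ∀ x : ℝ, (‖((x : ℂ))‖) ^ 2 = x ^ 2 := fun x => by
      simp [sq_abs]
    have hsum1 : ∑' n : ℕ, wtilde (n + 1) * ‖u (n + 1)‖ ^ 2
        = ∑ n ∈ Finset.range M, wtilde (n + 1) * v (n + 1) ^ 2 := by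
      rw [tsum_eq_sum (s := Finset.range M) ?_]
      · exact Finset.sum_congr rfl fun n _ => by rw [show u (n+1) = ((v (n+1) : ℝ) : ℂ) from rfl, habs]
      · intro n hn
        have hMn : M ≤ n := by
          by_contra hc; push_neg at hc; exact hn (Finset.mem_range.2 hc)
        have : v (n + 1) = 0 := hvzero _ (le_trans hMn (Nat.le_succ n))
        simp [hu, this]
    have hsum2 : ∑' n : ℕ, ‖u (n + 1) - u n‖ ^ 2
        = ∑ n ∈ Finset.range M, (v (n + 1) - v n) ^ 2 := by
      rw [tsum_eq_sum (s := Finset.range M) ?_]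
      · refine Finset.sum_congr rfl fun n _ => ?_
        rw [show u (n+1) - u n = (((v (n+1) - v n : ℝ)) : ℂ) by simp [hu], habs]
      · intro n hn
        have hMn : M ≤ n := by
          by_contra hc; push_neg at hc; exact hn (Finset.mem_range.2 hc)
        have h1 : v (n + 1) = 0 := hvzero _ (le_trans hMn (Nat.le_succ n))
        have h2 : v n = 0 := hvzero _ hMn
        simp [hu, h1, h2]
    have hineq := hin u hu0 hufin
    rw [hsum1, hsum2] at hineq
    -- the casted form of v (n+1)
    have hvcast : ∀ n : ℕ, v (n + 1) = Real.sqrt ((n : ℝ) + 1) * ψ (n + 1) := by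
      intro n
      simp only [hv]
      push_cast
      ring_nf
    -- gain from the gap at N
    have hgain : δ * (N : ℝ) ≤
        ∑ n ∈ Finset.range M, (wtilde (n + 1) - wR (n + 1)) * v (n + 1) ^ 2 := by
      have hmem : N - 1 ∈ Finset.range M := Finset.mem_range.2 (by omega)
      have hnonneg : ∀ i ∈ Finset.range M, 0 ≤ (wtilde (i + 1) - wR (i + 1)) * v (i + 1) ^ 2 := by
        intro i _
        apply mul_nonneg _ (sq_nonneg _)
        have := hge (i + 1) (by omega)
        simp only [wR]
        linarith
      have hsingle := Finset.single_le_sum hnonneg hmem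
      have hNidx : N - 1 + 1 = N := by omega
      rw [hNidx] at hsingle
      have hvN : v N ^ 2 = (N : ℝ) := by
        simp only [hv, hψN1, mul_one]
        exact Real.sq_sqrt hNpos.le
      calc δ * (N : ℝ) = (wtilde N - wR N) * v N ^ 2 := by rw [hvN]
        _ ≤ _ := hsingle
    -- split the gain sum
    have hsplit : ∑ n ∈ Finset.range M, (wtilde (n + 1) - wR (n + 1)) * v (n + 1) ^ 2
        = (∑ n ∈ Finset.range M, wtilde (n + 1) * v (n + 1) ^ 2)
          - ∑ n ∈ Finset.range M, wR (n + 1) * v (n + 1) ^ 2 := by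
      rw [← Finset.sum_sub_distrib]
      exact Finset.sum_congr rfl fun n _ => by ring
    -- the ground state representation
    have hid := identity ψ M
    have hid' : (∑ n ∈ Finset.range M, (v (n + 1) - v n) ^ 2)
        - ∑ n ∈ Finset.range M, wR (n + 1) * v (n + 1) ^ 2
        = ∑ n ∈ Finset.range M, Real.sqrt ((n : ℝ) * ((n : ℝ) + 1)) * (ψ (n + 1) - ψ n) ^ 2 := by
      have hψM : ψ M = 0 := hψzero M le_rfl
      rw [← Finset.sum_sub_distrib]
      have hcong : ∀ n ∈ Finset.range M,
          (v (n + 1) - v n) ^ 2 - wR (n + 1) * v (n + 1) ^ 2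
          = (Real.sqrt ((n : ℝ) + 1) * ψ (n + 1) - Real.sqrt (n : ℝ) * ψ n) ^ 2
            - wR (n + 1) * (Real.sqrt ((n : ℝ) + 1) * ψ (n + 1)) ^ 2 := by
        intro n _
        rw [hvcast n]
      rw [Finset.sum_congr rfl hcong, hid, hψM]
      ring
    -- bound the slack
    have hslack : ∑ n ∈ Finset.range M,
        Real.sqrt ((n : ℝ) * ((n : ℝ) + 1)) * (ψ (n + 1) - ψ n) ^ 2 ≤ 1 / T := by
      have hterm : ∀ n ∈ Finset.range M,
          Real.sqrt ((n : ℝ) * ((n : ℝ) + 1)) * (ψ (n + 1) - ψ n) ^ 2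
          ≤ (ψ n - ψ (n + 1)) / T := by
        intro n _
        set d := ψ n - ψ (n + 1) with hd
        have hd0 : 0 ≤ d := by
          have := hψanti n (n + 1) (Nat.le_succ n)
          simp only [hd]; linarith
        have hdle : d ≤ 1 / (((n : ℝ) + 1) * T) := by
          have hargle : 1 + (hsum N - hsum (n + 1)) / T ≤ 1 + (hsum N - hsum n) / T := by
            have := hsum_mono (Nat.le_succ n)
            gcongr
          have hlip := clamp_lip hargle
          have : (1 + (hsum N - hsum n) / T) - (1 + (hsum N - hsum (n + 1)) / T)
              = 1 / (((n : ℝ) + 1) * T) := by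
            rw [hsum_succ n]
            field_simp
            ring
          simp only [hψ, hd]
          linarith [hlip, this.symm.le, this.le]
        have hn1pos : (0:ℝ) < (n : ℝ) + 1 := by positivity
        have hsle : Real.sqrt ((n : ℝ) * ((n : ℝ) + 1)) ≤ (n : ℝ) + 1 := by
          have h1 : Real.sqrt ((n : ℝ) * ((n : ℝ) + 1))
              ≤ Real.sqrt (((n : ℝ) + 1) ^ 2) :=
            Real.sqrt_le_sqrt (by nlinarith [Nat.cast_nonneg (α := ℝ) n])
          rwa [Real.sqrt_sq hn1pos.le] at h1
        have hdsq : (ψ (n + 1) - ψ n) ^ 2 = d ^ 2 := by simp only [hd]; ring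
        rw [hdsq]
        calc Real.sqrt ((n : ℝ) * ((n : ℝ) + 1)) * d ^ 2
            ≤ ((n : ℝ) + 1) * d ^ 2 := mul_le_mul_of_nonneg_right hsle (sq_nonneg d)
          _ = (((n : ℝ) + 1) * d) * d := by ring
          _ ≤ (((n : ℝ) + 1) * d) * (1 / (((n : ℝ) + 1) * T)) := by
              apply mul_le_mul_of_nonneg_left hdle (mul_nonneg hn1pos.le hd0)
          _ = d / T := by field_simp
      calc ∑ n ∈ Finset.range M,
            Real.sqrt ((n : ℝ) * ((n : ℝ) + 1)) * (ψ (n + 1) - ψ n) ^ 2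
          ≤ ∑ n ∈ Finset.range M, (ψ n - ψ (n + 1)) / T := Finset.sum_le_sum hterm
        _ = (∑ n ∈ Finset.range M, (ψ n - ψ (n + 1))) / T := by rw [Finset.sum_div]
        _ = (ψ 0 - ψ M) / T := by rw [Finset.sum_range_sub' ψ M]
        _ ≤ 1 / T := by
            apply div_le_div_of_nonneg_right ?_ hT.le
            simp only [hψ]
            linarith [clamp_le_one (1 + (hsum N - hsum 0) / T),
              clamp_nonneg (1 + (hsum N - hsum M) / T)]
    calc δ * (N : ℝ) ≤ ∑ n ∈ Finset.range M, (wtilde (n + 1) - wR (n + 1)) * v (n + 1) ^ 2 :=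
        hgain
      _ = (∑ n ∈ Finset.range M, wtilde (n + 1) * v (n + 1) ^ 2)
          - ∑ n ∈ Finset.range M, wR (n + 1) * v (n + 1) ^ 2 := hsplit
      _ ≤ (∑ n ∈ Finset.range M, (v (n + 1) - v n) ^ 2)
          - ∑ n ∈ Finset.range M, wR (n + 1) * v (n + 1) ^ 2 := sub_le_sub_right hineq _
      _ = ∑ n ∈ Finset.range M, Real.sqrt ((n : ℝ) * ((n : ℝ) + 1)) * (ψ (n + 1) - ψ n) ^ 2 :=
        hid'
      _ ≤ 1 / T := hslack
  -- conclude: δ * N ≤ 1/T for all T > 0 forces δ ≤ 0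
  have hT : (0:ℝ) < 2 / (δ * (N : ℝ)) := by positivity
  have h := key _ hT
  rw [one_div_div] at h
  nlinarith [mul_pos hδpos hNpos]
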